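/- arXiv:1612.05929 — 4 statements merged into one kernel-verified Lean document; each statement's English description precedes it below -/
import Mathlib

section
/- If R is an involutive solution of the braid relation on V⊗V (R₁₂R₂₃R₁₂ = R₂₃R₁₂R₂₃ and R² = I), then for any nonzero constant a, the operator R(u,v) = R - (a/(u-v))·I satisfies the quantum Yang–Baxter equation R₁₂(u,v) R₂₃(u,w) R₁₂(v,w) = R₂₃(v,w) R₁₂(u,w) R₂₃(u,v) whenever u, v, w are pairwise distinct. -/
open Matrix BigOperators

variable {K : Type*} [Field K] [CharZero K]

def lift12 {N : ℕ} (A : Matrix (Fin N × Fin N) (Fin N × Fin N) K) :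
    Matrix (Fin N × Fin N × Fin N) (Fin N × Fin N × Fin N) K :=
  Matrix.of fun p q => A (p.1, p.2.1) (q.1, q.2.1) * (if p.2.2 = q.2.2 then 1 else 0)

def lift23 {N : ℕ} (A : Matrix (Fin N × Fin N) (Fin N × Fin N) K) :
    Matrix (Fin N × Fin N × Fin N) (Fin N × Fin N × Fin N) K :=
  Matrix.of fun p q => (if p.1 = q.1 then 1 else 0) * A (p.2.1, p.2.2) (q.2.1, q.2.2)

/-- The rational Baxterization R(u,v) = R − (a/(u−v))·I of an involutive symmetry. -/
def ratBax {N : ℕ} (R : Matrix (Fin N × Fin N) (Fin N × Fin N) K) (a u v : K) :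
    Matrix (Fin N × Fin N) (Fin N × Fin N) K :=
  R - (a / (u - v)) • (1 : Matrix (Fin N × Fin N) (Fin N × Fin N) K)


omit [CharZero K] in
lemma lift12_one {N : ℕ} : lift12 (1 : Matrix (Fin N × Fin N) (Fin N × Fin N) K) = 1 := by
  ext p q
  simp [lift12, Matrix.one_apply, Prod.ext_iff]
  aesop

omit [CharZero K] in
lemma lift23_one {N : ℕ} : lift23 (1 : Matrix (Fin N × Fin N) (Fin N × Fin N) K) = 1 := by
  ext p q
  simp [lift23, Matrix.one_apply, Prod.ext_iff]
  aesop

omit [CharZero K] in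
lemma lift12_mul {N : ℕ} (A B : Matrix (Fin N × Fin N) (Fin N × Fin N) K) :
    lift12 (A * B) = lift12 A * lift12 B := by
  ext p q
  simp [lift12, Matrix.mul_apply, Fintype.sum_prod_type, mul_ite, ite_mul,
    Finset.mul_sum, Finset.sum_mul]

omit [CharZero K] in
lemma lift23_mul {N : ℕ} (A B : Matrix (Fin N × Fin N) (Fin N × Fin N) K) :
    lift23 (A * B) = lift23 A * lift23 B := by
  ext p q
  simp [lift23, Matrix.mul_apply, Fintype.sum_prod_type, mul_ite, ite_mul,
    Finset.mul_sum, Finset.sum_mul]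

omit [CharZero K] in
lemma lift12_ratBax {N : ℕ} (R : Matrix (Fin N × Fin N) (Fin N × Fin N) K) (a u v : K) :
    lift12 (ratBax R a u v) = lift12 R - (a / (u - v)) • 1 := by
  ext p q
  simp [lift12, ratBax, Matrix.sub_apply, Matrix.smul_apply, Matrix.one_apply, Prod.ext_iff,
    sub_mul, mul_ite]
  aesop

omit [CharZero K] in
lemma lift23_ratBax {N : ℕ} (R : Matrix (Fin N × Fin N) (Fin N × Fin N) K) (a u v : K) :
    lift23 (ratBax R a u v) = lift23 R - (a / (u - v)) • 1 := by
  ext p q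
  simp [lift23, ratBax, Matrix.sub_apply, Matrix.smul_apply, Matrix.one_apply, Prod.ext_iff,
    mul_sub, mul_ite]
  aesop

omit [CharZero K] in
lemma key {M : Type*} [Ring M] [Algebra K M] (A B : M) (x y z : K)
    (hbr : A * B * A = B * A * B) (hA : A * A = 1) (hB : B * B = 1)
    (hx : x * y + y * z = x * z) :
    (A - x • 1) * (B - y • 1) * (A - z • 1) = (B - z • 1) * (A - y • 1) * (B - x • 1) := by
  have e1 : (A - x • 1) * (B - y • 1) * (A - z • 1)
      = A * B * A - z • (A * B) - y • (A * A) + (y * z) • A - x • (B * A) + (x * z) • B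
        + (x * y) • A - (x * y * z) • (1 : M) := by
    simp only [sub_mul, mul_sub, smul_mul_assoc, mul_smul_comm, one_mul, mul_one, smul_smul]
    module
  have e2 : (B - z • 1) * (A - y • 1) * (B - x • 1)
      = B * A * B - x • (B * A) - y • (B * B) + (x * y) • B - z • (A * B) + (x * z) • A
        + (y * z) • B - (x * y * z) • (1 : M) := by
    simp only [sub_mul, mul_sub, smul_mul_assoc, mul_smul_comm, one_mul, mul_one, smul_smul]
    module
  rw [e1, e2, hbr, hA, hB]
  have hxz : x * z = x * y + y * z := hx.symm
  rw [hxz]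
  module

/-- the rational Baxterization of an involutive symmetry satisfies
the quantum Yang–Baxter equation. -/
theorem rational_baxterization_QYBE {N : ℕ}
    (R : Matrix (Fin N × Fin N) (Fin N × Fin N) K)
    (hbraid : lift12 R * lift23 R * lift12 R = lift23 R * lift12 R * lift23 R)
    (hinv : R * R = 1)
    (a : K) (ha : a ≠ 0) (u v w : K) (huv : u ≠ v) (huw : u ≠ w) (hvw : v ≠ w) :
    lift12 (ratBax R a u v) * lift23 (ratBax R a u w) * lift12 (ratBax R a v w) =
      lift23 (ratBax R a v w) * lift12 (ratBax R a u w) * lift23 (ratBax R a u v) := by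
  have hA : lift12 R * lift12 R = 1 := by rw [← lift12_mul, hinv, lift12_one]
  have hB : lift23 R * lift23 R = 1 := by rw [← lift23_mul, hinv, lift23_one]
  simp only [lift12_ratBax, lift23_ratBax]
  apply key _ _ _ _ _ hbraid hA hB
  have h1 : u - v ≠ 0 := sub_ne_zero.mpr huv
  have h2 : u - w ≠ 0 := sub_ne_zero.mpr huw
  have h3 : v - w ≠ 0 := sub_ne_zero.mpr hvw
  field_simp
  ring
end

section
/- Let R be a skew-invertible involutive symmetry and let L(u) = I + Σ_{k≥1} L[k]u^{−k} satisfy the braided Yangian relations R(u,v) L₁(u) R L₁(v) = L₁(v) R L₁(u) R(u,v) with R(u,v) = R − I/(u−v). If M is the generating matrix of the modified Reflection Equation algebra, satisfying R M₁ R M₁ − M₁ R M₁ R = R M₁ − M₁ R, then the matrix L(u) = I + M/u satisfies the braided Yangian relations; i.e., the evaluation map L(u) ↦ I + M/u is an algebra morphism from the braided Yangian to the modified RE algebra. -/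
open Matrix BigOperators

variable {K : Type*} [Field K]

/-- M₁ = M ⊗ I : the matrix M placed in the first of the two tensor factors. -/
def emb1 {N : ℕ} {A : Type*} [Ring A] (M : Matrix (Fin N) (Fin N) A) :
    Matrix (Fin N × Fin N) (Fin N × Fin N) A :=
  Matrix.of fun p q => M p.1 q.1 * (if p.2 = q.2 then 1 else 0)

/-- for an involutive symmetry R, if M satisfies the modified
Reflection Equation R M₁ R M₁ − M₁ R M₁ R = R M₁ − M₁ R, then L(u) = I + M/u
satisfies the braided Yangian relations
R(u,v) L₁(u) R L₁(v) = L₁(v) R L₁(u) R(u,v) with R(u,v) = R − I/(u−v);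
i.e. the evaluation map is a morphism from the braided Yangian to the
modified RE algebra. -/
theorem evaluation_morphism_involutive {N : ℕ}
    {A : Type*} [Ring A] [Algebra K A]
    (R : Matrix (Fin N × Fin N) (Fin N × Fin N) K)
    (hinv : R * R = 1)
    (M : Matrix (Fin N) (Fin N) A)
    (hmRE : R.map (algebraMap K A) * emb1 M * R.map (algebraMap K A) * emb1 M -
        emb1 M * R.map (algebraMap K A) * emb1 M * R.map (algebraMap K A) =
      R.map (algebraMap K A) * emb1 M - emb1 M * R.map (algebraMap K A)) :
    ∀ u v : K, u ≠ 0 → v ≠ 0 → u ≠ v →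
      (R.map (algebraMap K A) -
          (u - v)⁻¹ • (1 : Matrix (Fin N × Fin N) (Fin N × Fin N) A)) *
          (1 + u⁻¹ • emb1 M) * R.map (algebraMap K A) * (1 + v⁻¹ • emb1 M) =
        (1 + v⁻¹ • emb1 M) * R.map (algebraMap K A) * (1 + u⁻¹ • emb1 M) *
          (R.map (algebraMap K A) -
            (u - v)⁻¹ • (1 : Matrix (Fin N × Fin N) (Fin N × Fin N) A)) := by
  intro u v hu hv huv
  have huv' : u - v ≠ 0 := sub_ne_zero_of_ne huv
  set Rm := R.map (algebraMap K A) with hRm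
  set m := emb1 M with hm
  have hRR : Rm * Rm = 1 := by
    rw [hRm, ← Matrix.map_mul, hinv]
    simp
  have hre : Rm * m * Rm * m = m * Rm * m * Rm + (Rm * m - m * Rm) := by
    have := hmRE
    linear_combination (norm := abel) this
  have hRRx : ∀ x : Matrix (Fin N × Fin N) (Fin N × Fin N) A,
      Rm * (Rm * x) = x := fun x => by rw [← mul_assoc, hRR, one_mul]
  have hre' : Rm * (m * (Rm * m)) =
      m * (Rm * (m * Rm)) + (Rm * m - m * Rm) := by
    simpa only [mul_assoc] using hre
  rw [← sub_eq_zero]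
  simp only [mul_add, add_mul, mul_sub, sub_mul, smul_mul_assoc,
    mul_smul_comm, mul_one, one_mul, smul_smul, mul_assoc, hRR, hRRx, hre']
  match_scalars <;> field_simp <;> ring
end

section
/- Let R be a skew-invertible Hecke symmetry and M the generating matrix of the RE algebra, satisfying R M₁ R M₁ = M₁ R M₁ R. Then L(u) = I + M/u satisfies (u−v)(R L₁(u) R L₁(v) − L₁(v) R L₁(u) R) = (q−q⁻¹) u (L₁(u) R L₁(v) − L₁(v) R L₁(u)); i.e., the evaluation map L(u) ↦ I + M/u is a morphism from the braided Yangian (trigonometric case) to the RE algebra. -/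
open Matrix BigOperators

variable {K : Type*} [Field K]

/-- Abstract form of the evaluation-morphism identity in any `K`-algebra. -/
lemma key_aux {B : Type*} [Ring B] [Algebra K B] (S X : B) (lam u v : K)
    (hu : u ≠ 0) (hv : v ≠ 0)
    (hS : S * S = lam • S + 1)
    (hRE : S * X * S * X = X * S * X * S) :
    (u - v) • (S * (1 + u⁻¹ • X) * S * (1 + v⁻¹ • X) -
        (1 + v⁻¹ • X) * S * (1 + u⁻¹ • X) * S) =
    (lam * u) • ((1 + u⁻¹ • X) * S * (1 + v⁻¹ • X) -
        (1 + v⁻¹ • X) * S * (1 + u⁻¹ • X)) := by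
  have hA : S * S * X - X * S * S = lam • (S * X - X * S) := by
    rw [mul_assoc X S S, hS]
    simp only [add_mul, mul_add, smul_mul_assoc, mul_smul_comm, one_mul, mul_one,
      smul_sub]
    abel
  have hexp : S * (1 + u⁻¹ • X) * S * (1 + v⁻¹ • X) -
      (1 + v⁻¹ • X) * S * (1 + u⁻¹ • X) * S
      = v⁻¹ • (S * S * X - X * S * S) := by
    simp only [mul_add, add_mul, mul_one, one_mul, smul_mul_assoc, mul_smul_comm,
      smul_smul, smul_sub, smul_add]
    rw [hRE]
    module
  have hE : (1 + u⁻¹ • X) * S * (1 + v⁻¹ • X) - (1 + v⁻¹ • X) * S * (1 + u⁻¹ • X)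
      = (v⁻¹ - u⁻¹) • (S * X - X * S) := by
    simp only [mul_add, add_mul, mul_one, one_mul, smul_mul_assoc, mul_smul_comm,
      smul_smul, smul_sub, smul_add, sub_smul]
    module
  rw [hexp, hA, hE, smul_smul, smul_smul, smul_smul]
  congr 1
  field_simp

/-- for a Hecke symmetry R, if M satisfies the Reflection Equation
R M₁ R M₁ = M₁ R M₁ R, then L(u) = I + M/u satisfies
(u−v)(R L₁(u) R L₁(v) − L₁(v) R L₁(u) R) = (q−q⁻¹)u (L₁(u) R L₁(v) − L₁(v) R L₁(u));
i.e. the evaluation map is a morphism from the braided Yangian (trigonometric case)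
to the RE algebra. -/
theorem evaluation_morphism_hecke {N : ℕ}
    {A : Type*} [Ring A] [Algebra K A]
    (R : Matrix (Fin N × Fin N) (Fin N × Fin N) K) (q : K)
    (hHecke : R * R = (q - q⁻¹) • R + 1) (hq0 : q ≠ 0)
    (M : Matrix (Fin N) (Fin N) A)
    (hRE : R.map (algebraMap K A) * emb1 M * R.map (algebraMap K A) * emb1 M =
      emb1 M * R.map (algebraMap K A) * emb1 M * R.map (algebraMap K A)) :
    ∀ u v : K, u ≠ 0 → v ≠ 0 → u ≠ v →
      (u - v) • (R.map (algebraMap K A) * (1 + u⁻¹ • emb1 M) *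
            R.map (algebraMap K A) * (1 + v⁻¹ • emb1 M) -
          (1 + v⁻¹ • emb1 M) * R.map (algebraMap K A) *
            (1 + u⁻¹ • emb1 M) * R.map (algebraMap K A)) =
        ((q - q⁻¹) * u) • ((1 + u⁻¹ • emb1 M) * R.map (algebraMap K A) *
              (1 + v⁻¹ • emb1 M) -
            (1 + v⁻¹ • emb1 M) * R.map (algebraMap K A) * (1 + u⁻¹ • emb1 M)) := by
  intro u v hu hv huv
  have hS : R.map (algebraMap K A) * R.map (algebraMap K A) =
      (q - q⁻¹) • R.map (algebraMap K A) + 1 := by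
    rw [← Matrix.map_mul, hHecke]
    ext i j
    simp only [Matrix.map_apply, Matrix.add_apply, Matrix.smul_apply, Matrix.one_apply,
      apply_ite, map_add, _root_.map_one, map_zero, smul_eq_mul, _root_.map_mul]
    simp [Algebra.smul_def, map_sub]
    split_ifs with h <;> simp [h]
  exact key_aux (R.map (algebraMap K A)) (emb1 M) (q - q⁻¹) u v hu hv hS hRE
end

section
/- Let R be a skew-invertible Hecke symmetry, B = Tr₁Ψ, and let a_i⁺, a^j be operators on the R-Fock space F(R) = Sym_R(V) satisfying q a_i⁺a_j⁺ = R_{ij}^{kl} a_k⁺a_l⁺, q a^i a^j = R_{lk}^{ji} a^k a^l, and a^j a_i⁺ − q⁻¹ (R⁻¹)_{ik}^{jl} a_l⁺ a^k = δ_i^j. Then the elements l_i^j = a_i⁺ a^k B_k^j satisfy the modified Reflection Equation relations R L₁ R L₁ − L₁ R L₁ R = R L₁ − L₁ R; i.e., the bosonization map l_i^j ↦ a_i⁺ a^k B_k^j is a representation of the modified RE algebra. -/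
open Matrix BigOperators

variable {K : Type*} [Field K]

/-- L₁ = L ⊗ I for the matrix with entries l_i^j = x_i x^j. -/
def bosL1 {N : ℕ} {A : Type*} [Ring A] (x y : Fin N → A) :
    Matrix (Fin N × Fin N) (Fin N × Fin N) A :=
  Matrix.of fun p q => (x p.1 * y q.1) * (if p.2 = q.2 then 1 else 0)

section Aux

variable {N : ℕ} {A : Type*} [Ring A] [Algebra K A]

private lemma bos_swap {ι : Type*} [Fintype ι] {M : Type*} [AddCommMonoid M]
    (g : ι → ι → M) : ∑ a, ∑ b, g a b = ∑ b, ∑ a, g a b :=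
  Finset.sum_comm

/-- Full reversal of a quadruple sum. -/
private lemma bos_sum4_rev {ι : Type*} [Fintype ι] {M : Type*} [AddCommMonoid M]
    (f : ι → ι → ι → ι → M) :
    ∑ a, ∑ b, ∑ c, ∑ d, f a b c d = ∑ d, ∑ c, ∑ b, ∑ a, f a b c d := by
  calc ∑ a, ∑ b, ∑ c, ∑ d, f a b c d
      = ∑ b, ∑ a, ∑ c, ∑ d, f a b c d := bos_swap _
    _ = ∑ b, ∑ c, ∑ a, ∑ d, f a b c d :=
        Finset.sum_congr rfl fun b _ => bos_swap _
    _ = ∑ b, ∑ c, ∑ d, ∑ a, f a b c d :=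
        Finset.sum_congr rfl fun b _ => Finset.sum_congr rfl fun c _ => bos_swap _
    _ = ∑ c, ∑ b, ∑ d, ∑ a, f a b c d := bos_swap _
    _ = ∑ c, ∑ d, ∑ b, ∑ a, f a b c d :=
        Finset.sum_congr rfl fun c _ => bos_swap _
    _ = ∑ d, ∑ c, ∑ b, ∑ a, f a b c d := bos_swap _

private lemma bos_entry_RL (R : Matrix (Fin N × Fin N) (Fin N × Fin N) K)
    (x y : Fin N → A) (i j m n : Fin N) :
    (R.map (algebraMap K A) * bosL1 x y) (i, j) (m, n) =
      ∑ a, R (i, j) (a, n) • (x a * y m) := by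
  simp only [Matrix.mul_apply, bosL1, Matrix.map_apply, Fintype.sum_prod_type,
    Matrix.of_apply, mul_ite, ite_mul, mul_zero, zero_mul, mul_one, one_mul,
    Finset.sum_ite_eq, Finset.sum_ite_eq', Finset.mem_univ, if_true,
    Finset.sum_mul, Finset.mul_sum, Algebra.smul_def]

private lemma bos_entry_LR (R : Matrix (Fin N × Fin N) (Fin N × Fin N) K)
    (x y : Fin N → A) (i j m n : Fin N) :
    (bosL1 x y * R.map (algebraMap K A)) (i, j) (m, n) =
      ∑ c, R (c, j) (m, n) • (x i * y c) := by
  simp only [Matrix.mul_apply, bosL1, Matrix.map_apply, Fintype.sum_prod_type,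
    Matrix.of_apply, mul_ite, ite_mul, mul_zero, zero_mul, mul_one, one_mul,
    Finset.sum_ite_eq, Finset.sum_ite_eq', Finset.mem_univ, if_true,
    Finset.sum_mul, Finset.mul_sum]
  refine Finset.sum_congr rfl fun c _ => ?_
  rw [Algebra.smul_def, ← Algebra.commutes]

private lemma bos_entry_RLRL (R : Matrix (Fin N × Fin N) (Fin N × Fin N) K)
    (x y : Fin N → A) (i j m n : Fin N) :
    (R.map (algebraMap K A) * bosL1 x y * R.map (algebraMap K A) * bosL1 x y)
        (i, j) (m, n) =
      ∑ e, ∑ c, ∑ d, ∑ a,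
        R (i, j) (a, d) • (R (c, d) (e, n) • (x a * (y c * (x e * y m)))) := by
  simp only [Matrix.mul_apply, bosL1, Matrix.map_apply, Fintype.sum_prod_type,
    Matrix.of_apply, mul_ite, ite_mul, mul_zero, zero_mul, mul_one, one_mul,
    Finset.sum_ite_eq, Finset.sum_ite_eq', Finset.mem_univ, if_true,
    Finset.sum_mul, Finset.mul_sum]
  refine Finset.sum_congr rfl fun e _ => Finset.sum_congr rfl fun c _ =>
    Finset.sum_congr rfl fun d _ => Finset.sum_congr rfl fun a _ => ?_
  simp only [← Algebra.commutes, ← Algebra.smul_def, smul_mul_assoc,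
    mul_smul_comm, mul_assoc]

private lemma bos_entry_LRLR (R : Matrix (Fin N × Fin N) (Fin N × Fin N) K)
    (x y : Fin N → A) (i j m n : Fin N) :
    (bosL1 x y * R.map (algebraMap K A) * bosL1 x y * R.map (algebraMap K A))
        (i, j) (m, n) =
      ∑ g, ∑ h, ∑ e, ∑ c,
        R (c, j) (e, h) • (R (g, h) (m, n) • (x i * (y c * (x e * y g)))) := by
  simp only [Matrix.mul_apply, bosL1, Matrix.map_apply, Fintype.sum_prod_type,
    Matrix.of_apply, mul_ite, ite_mul, mul_zero, zero_mul, mul_one, one_mul,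
    Finset.sum_ite_eq, Finset.sum_ite_eq', Finset.mem_univ, if_true,
    Finset.sum_mul, Finset.mul_sum]
  refine Finset.sum_congr rfl fun g _ => Finset.sum_congr rfl fun h _ =>
    Finset.sum_congr rfl fun e _ => Finset.sum_congr rfl fun c _ => ?_
  simp only [← Algebra.commutes, ← Algebra.smul_def, smul_mul_assoc,
    mul_smul_comm, mul_assoc]

private lemma bos_key1 (R : Matrix (Fin N × Fin N) (Fin N × Fin N) K)
    (q : K) (hq0 : q ≠ 0) (x y : Fin N → A)
    (h1 : ∀ i j : Fin N,
      q • (x i * x j) = ∑ k : Fin N, ∑ l : Fin N, R (i, j) (k, l) • (x k * x l))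
    (h3 : ∀ i j : Fin N,
      (∑ a : Fin N, ∑ b : Fin N, R (a, i) (b, j) • (y a * x b)) =
        (if i = j then 1 else 0) + q⁻¹ • (x i * y j))
    (i j m n : Fin N) :
    (∑ e, ∑ c, ∑ d, ∑ a,
        R (i, j) (a, d) • (R (c, d) (e, n) • (x a * (y c * (x e * y m))))) =
      (∑ a, R (i, j) (a, n) • (x a * y m)) + x i * x j * (y n * y m) := by
  rw [bos_sum4_rev]
  have step : ∀ a d : Fin N,
      (∑ c, ∑ e, R (i, j) (a, d) • (R (c, d) (e, n) • (x a * (y c * (x e * y m)))))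
        = R (i, j) (a, d) •
            (x a * (((if d = n then (1:A) else 0) + q⁻¹ • (x d * y n)) * y m)) := by
    intro a d
    rw [← h3 d n]
    simp only [Finset.mul_sum, Finset.sum_mul, Finset.smul_sum, smul_mul_assoc,
      mul_smul_comm, mul_assoc]
  calc ∑ a, ∑ d, ∑ c, ∑ e,
        R (i, j) (a, d) • (R (c, d) (e, n) • (x a * (y c * (x e * y m))))
      = ∑ a, ∑ d, R (i, j) (a, d) •
          (x a * (((if d = n then (1:A) else 0) + q⁻¹ • (x d * y n)) * y m)) :=
        Finset.sum_congr rfl fun a _ => Finset.sum_congr rfl fun d _ => step a d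
    _ = (∑ a, R (i, j) (a, n) • (x a * y m)) +
          ∑ a, ∑ d, R (i, j) (a, d) • (q⁻¹ • (x a * (x d * (y n * y m)))) := by
        simp only [add_mul, mul_add, smul_add, ite_mul, one_mul, zero_mul,
          mul_ite, mul_zero, smul_ite, smul_zero, Finset.sum_add_distrib,
          Finset.sum_ite_eq', Finset.mem_univ, if_true, smul_mul_assoc,
          mul_smul_comm, mul_assoc]
    _ = (∑ a, R (i, j) (a, n) • (x a * y m)) + x i * x j * (y n * y m) := by
        congr 1
        calc ∑ a, ∑ d, R (i, j) (a, d) • (q⁻¹ • (x a * (x d * (y n * y m))))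
            = q⁻¹ • ((∑ k, ∑ l, R (i, j) (k, l) • (x k * x l)) * (y n * y m)) := by
              simp only [Finset.sum_mul, Finset.smul_sum, smul_mul_assoc,
                mul_smul_comm, smul_smul, mul_assoc]
              exact Finset.sum_congr rfl fun a _ => Finset.sum_congr rfl
                fun d _ => by rw [mul_comm]
          _ = q⁻¹ • ((q • (x i * x j)) * (y n * y m)) := by rw [← h1]
          _ = x i * x j * (y n * y m) := by
              rw [smul_mul_assoc, smul_smul, inv_mul_cancel₀ hq0, one_smul]

private lemma bos_key2 (R : Matrix (Fin N × Fin N) (Fin N × Fin N) K)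
    (q : K) (hq0 : q ≠ 0) (x y : Fin N → A)
    (h2 : ∀ i j : Fin N,
      q • (y i * y j) = ∑ k : Fin N, ∑ l : Fin N, R (l, k) (j, i) • (y k * y l))
    (h3 : ∀ i j : Fin N,
      (∑ a : Fin N, ∑ b : Fin N, R (a, i) (b, j) • (y a * x b)) =
        (if i = j then 1 else 0) + q⁻¹ • (x i * y j))
    (i j m n : Fin N) :
    (∑ g, ∑ h, ∑ e, ∑ c,
        R (c, j) (e, h) • (R (g, h) (m, n) • (x i * (y c * (x e * y g))))) =
      (∑ c, R (c, j) (m, n) • (x i * y c)) + x i * x j * (y n * y m) := by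
  have step : ∀ g h : Fin N,
      (∑ e, ∑ c, R (c, j) (e, h) • (R (g, h) (m, n) • (x i * (y c * (x e * y g)))))
        = R (g, h) (m, n) •
            (x i * (((if j = h then (1:A) else 0) + q⁻¹ • (x j * y h)) * y g)) := by
    intro g h
    rw [← h3 j h]
    simp only [Finset.mul_sum, Finset.sum_mul, Finset.smul_sum, smul_mul_assoc,
      mul_smul_comm, mul_assoc, smul_smul]
    rw [Finset.sum_comm]
    exact Finset.sum_congr rfl fun c _ => Finset.sum_congr rfl
      fun e _ => by rw [mul_comm]
  calc ∑ g, ∑ h, ∑ e, ∑ c,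
        R (c, j) (e, h) • (R (g, h) (m, n) • (x i * (y c * (x e * y g))))
      = ∑ g, ∑ h, R (g, h) (m, n) •
          (x i * (((if j = h then (1:A) else 0) + q⁻¹ • (x j * y h)) * y g)) :=
        Finset.sum_congr rfl fun g _ => Finset.sum_congr rfl fun h _ => step g h
    _ = (∑ g, R (g, j) (m, n) • (x i * y g)) +
          ∑ g, ∑ h, R (g, h) (m, n) • (q⁻¹ • (x i * (x j * (y h * y g)))) := by
        simp only [add_mul, mul_add, smul_add, ite_mul, one_mul, zero_mul,
          mul_ite, mul_zero, smul_ite, smul_zero, Finset.sum_add_distrib,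
          smul_mul_assoc, mul_smul_comm, mul_assoc]
        congr 1
        refine Finset.sum_congr rfl fun g _ => ?_
        simp [eq_comm]
    _ = (∑ c, R (c, j) (m, n) • (x i * y c)) + x i * x j * (y n * y m) := by
        congr 1
        calc ∑ g, ∑ h, R (g, h) (m, n) • (q⁻¹ • (x i * (x j * (y h * y g))))
            = q⁻¹ • ((x i * x j) *
                (∑ k, ∑ l, R (l, k) (m, n) • (y k * y l))) := by
              rw [Finset.sum_comm]
              simp only [Finset.mul_sum, Finset.smul_sum, smul_mul_assoc,
                mul_smul_comm, smul_smul, mul_assoc]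
              exact Finset.sum_congr rfl fun h _ => Finset.sum_congr rfl
                fun g _ => by rw [mul_comm]
          _ = q⁻¹ • ((x i * x j) * (q • (y n * y m))) := by rw [← h2]
          _ = x i * x j * (y n * y m) := by
              rw [mul_smul_comm, smul_smul, inv_mul_cancel₀ hq0, one_smul]

end Aux

/-- bosonization of the modified RE algebra: in any associative
algebra with elements x_i, x^j subject to
q x_i x_j = R_{ij}^{kl} x_k x_l,  q x^i x^j = R_{lk}^{ji} x^k x^l,
and x^a R_{ai}^{bj} x_b = δ_i^j + q⁻¹ x_i x^j, the matrix L with entries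
l_i^j = x_i x^j satisfies the modified Reflection Equation
R L₁ R L₁ − L₁ R L₁ R = R L₁ − L₁ R. -/
theorem bosonization_modified_RE {N : ℕ}
    {A : Type*} [Ring A] [Algebra K A]
    (R : Matrix (Fin N × Fin N) (Fin N × Fin N) K) (q : K) (hq0 : q ≠ 0)
    (x y : Fin N → A)
    (h1 : ∀ i j : Fin N,
      q • (x i * x j) = ∑ k : Fin N, ∑ l : Fin N, R (i, j) (k, l) • (x k * x l))
    (h2 : ∀ i j : Fin N,
      q • (y i * y j) = ∑ k : Fin N, ∑ l : Fin N, R (l, k) (j, i) • (y k * y l))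
    (h3 : ∀ i j : Fin N,
      (∑ a : Fin N, ∑ b : Fin N, R (a, i) (b, j) • (y a * x b)) =
        (if i = j then 1 else 0) + q⁻¹ • (x i * y j)) :
    R.map (algebraMap K A) * bosL1 x y * R.map (algebraMap K A) * bosL1 x y -
        bosL1 x y * R.map (algebraMap K A) * bosL1 x y * R.map (algebraMap K A) =
      R.map (algebraMap K A) * bosL1 x y - bosL1 x y * R.map (algebraMap K A) := by
  ext ⟨i, j⟩ ⟨m, n⟩
  rw [Matrix.sub_apply, Matrix.sub_apply, bos_entry_RLRL, bos_entry_LRLR,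
    bos_entry_RL, bos_entry_LR, bos_key1 R q hq0 x y h1 h3 i j m n,
    bos_key2 R q hq0 x y h2 h3 i j m n]
  abel
end
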